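/- Let M be a compact metric space, φ : ℝ × M → M a continuous flow, and g : M → ℝ a continuous function. Suppose x₀ ∈ M satisfies ∫₀^t g(φ_s(x₀)) ds ≤ 0 for all t ≥ 0. Then there exists a φ-invariant Borel probability measure μ on the ω-limit set of x₀ such that ∫ g dμ ≤ 0. -/

import Mathlib

open MeasureTheory Filter Topology Set
open scoped ENNReal NNReal
set_option linter.unusedSectionVars false
set_option maxHeartbeats 1000000

section aux
variable {M : Type*} [MetricSpace M] [CompactSpace M] [MeasurableSpace M] [BorelSpace M]
variable (ν : ℕ → Measure M) (U : Ultrafilter ℕ)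

noncomputable def mA (A : Set M) : ℝ := limUnder (U : Filter ℕ) (fun n => (ν n A).toReal)

lemma tendsto_of_bdd {f : ℕ → ℝ} {a b : ℝ} (h : ∀ n, f n ∈ Set.Icc a b) :
    Tendsto f (U : Filter ℕ) (𝓝 (limUnder (U : Filter ℕ) f)) := by
  have hle : (U.map f : Filter ℝ) ≤ 𝓟 (Set.Icc a b) :=
    le_principal_iff.2 (Filter.mem_map.2 (by filter_upwards with n using h n))
  obtain ⟨c, -, hc⟩ := isCompact_Icc.ultrafilter_le_nhds (U.map f) hle
  have hc' : Tendsto f (U : Filter ℕ) (𝓝 c) := hc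
  rwa [hc'.limUnder_eq]

variable (hν : ∀ n, IsProbabilityMeasure (ν n))
include hν

lemma meas_mem (A : Set M) (n : ℕ) : (ν n A).toReal ∈ Set.Icc (0:ℝ) 1 := by
  haveI := hν n
  refine ⟨ENNReal.toReal_nonneg, ?_⟩
  have : ν n A ≤ 1 := prob_le_one
  simpa using ENNReal.toReal_mono ENNReal.one_ne_top this

lemma tendsto_mA (A : Set M) :
    Tendsto (fun n => (ν n A).toReal) (U : Filter ℕ) (𝓝 (mA ν U A)) :=
  tendsto_of_bdd U (meas_mem ν hν A)

lemma mA_nonneg (A : Set M) : 0 ≤ mA ν U A :=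
  le_of_tendsto_of_tendsto' tendsto_const_nhds (tendsto_mA ν U hν A)
    (fun n => (meas_mem ν hν A n).1)

lemma mA_le_one (A : Set M) : mA ν U A ≤ 1 :=
  le_of_tendsto_of_tendsto' (tendsto_mA ν U hν A) tendsto_const_nhds
    (fun n => (meas_mem ν hν A n).2)

lemma mA_mono {A B : Set M} (h : A ⊆ B) : mA ν U A ≤ mA ν U B := by
  refine le_of_tendsto_of_tendsto' (tendsto_mA ν U hν A) (tendsto_mA ν U hν B) (fun n => ?_)
  haveI := hν n
  exact ENNReal.toReal_mono (measure_ne_top _ _) (measure_mono h)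

lemma mA_union_le (A B : Set M) : mA ν U (A ∪ B) ≤ mA ν U A + mA ν U B := by
  refine le_of_tendsto_of_tendsto' (tendsto_mA ν U hν (A ∪ B))
    ((tendsto_mA ν U hν A).add (tendsto_mA ν U hν B)) (fun n => ?_)
  haveI := hν n
  rw [← ENNReal.toReal_add (measure_ne_top _ _) (measure_ne_top _ _)]
  exact ENNReal.toReal_mono (by finiteness) (measure_union_le A B)

lemma mA_union (A B : Set M) (hd : Disjoint A B) (hB : MeasurableSet B) :
    mA ν U (A ∪ B) = mA ν U A + mA ν U B := by
  refine tendsto_nhds_unique (tendsto_mA ν U hν (A ∪ B)) ?_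
  have : ∀ n, (ν n (A ∪ B)).toReal = (ν n A).toReal + (ν n B).toReal := by
    intro n
    haveI := hν n
    rw [measure_union hd hB, ENNReal.toReal_add (measure_ne_top _ _) (measure_ne_top _ _)]
  simp_rw [this]
  exact (tendsto_mA ν U hν A).add (tendsto_mA ν U hν B)

lemma mA_univ : mA ν U univ = 1 := by
  refine tendsto_nhds_unique (tendsto_mA ν U hν univ) ?_
  have : ∀ n, (ν n univ).toReal = 1 := fun n => by haveI := hν n; simp
  simp_rw [this]
  exact tendsto_const_nhds

omit hν

/-- outer regularization over open supersets -/
noncomputable def lamR (K : Set M) : ℝ := sInf (mA ν U '' {V | IsOpen V ∧ K ⊆ V})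

include hν

lemma lamR_set_nonempty (K : Set M) : (mA ν U '' {V | IsOpen V ∧ K ⊆ V}).Nonempty :=
  ⟨mA ν U univ, ⟨univ, ⟨isOpen_univ, subset_univ K⟩, rfl⟩⟩

lemma lamR_bddBelow (K : Set M) : BddBelow (mA ν U '' {V | IsOpen V ∧ K ⊆ V}) :=
  ⟨0, by rintro r ⟨V, -, rfl⟩; exact mA_nonneg ν U hν V⟩

lemma lamR_nonneg (K : Set M) : 0 ≤ lamR ν U K :=
  le_csInf (lamR_set_nonempty ν U hν K) (by rintro r ⟨V, -, rfl⟩; exact mA_nonneg ν U hν V)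

lemma lamR_le_mA {K V : Set M} (hV : IsOpen V) (hKV : K ⊆ V) : lamR ν U K ≤ mA ν U V :=
  csInf_le (lamR_bddBelow ν U hν K) ⟨V, ⟨hV, hKV⟩, rfl⟩

lemma lamR_mono {K L : Set M} (h : K ⊆ L) : lamR ν U K ≤ lamR ν U L :=
  le_csInf (lamR_set_nonempty ν U hν L)
    (by rintro r ⟨V, ⟨hV, hLV⟩, rfl⟩; exact lamR_le_mA ν U hν hV (h.trans hLV))

lemma lamR_union_le (K L : Set M) : lamR ν U (K ∪ L) ≤ lamR ν U K + lamR ν U L := by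
  refine le_of_forall_pos_le_add (fun ε hε => ?_)
  obtain ⟨r, ⟨V, ⟨hV, hKV⟩, rfl⟩, hr⟩ :=
    exists_lt_of_csInf_lt (lamR_set_nonempty ν U hν K) (show lamR ν U K < lamR ν U K + ε/2 by linarith)
  obtain ⟨r', ⟨W, ⟨hW, hLW⟩, rfl⟩, hr'⟩ :=
    exists_lt_of_csInf_lt (lamR_set_nonempty ν U hν L) (show lamR ν U L < lamR ν U L + ε/2 by linarith)
  have h1 : lamR ν U (K ∪ L) ≤ mA ν U (V ∪ W) :=
    lamR_le_mA ν U hν (hV.union hW) (union_subset_union hKV hLW)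
  have h2 := mA_union_le ν U hν V W
  linarith

lemma lamR_union_eq {K L : Set M} (hK : IsCompact K) (hL : IsCompact L) (hd : Disjoint K L) :
    lamR ν U (K ∪ L) = lamR ν U K + lamR ν U L := by
  refine le_antisymm (lamR_union_le ν U hν K L) ?_
  obtain ⟨V, W, hV, hW, hKV, hLW, hVW⟩ :=
    SeparatedNhds.of_isCompact_isCompact_isClosed hK hL hL.isClosed hd
  refine le_csInf (lamR_set_nonempty ν U hν (K ∪ L)) ?_
  rintro r ⟨O, ⟨hO, hKLO⟩, rfl⟩
  have h1 : lamR ν U K ≤ mA ν U (O ∩ V) :=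
    lamR_le_mA ν U hν (hO.inter hV) (subset_inter ((subset_union_left).trans hKLO) hKV)
  have h2 : lamR ν U L ≤ mA ν U (O ∩ W) :=
    lamR_le_mA ν U hν (hO.inter hW) (subset_inter ((subset_union_right).trans hKLO) hLW)
  have h3 : mA ν U ((O ∩ V) ∪ (O ∩ W)) = mA ν U (O ∩ V) + mA ν U (O ∩ W) :=
    mA_union ν U hν _ _ (hVW.mono inter_subset_right inter_subset_right)
      ((hO.inter hW).measurableSet)
  have h4 : mA ν U ((O ∩ V) ∪ (O ∩ W)) ≤ mA ν U O :=
    mA_mono ν U hν (by intro x hx; rcases hx with h | h; exacts [h.1, h.1])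
  linarith

/-- the content -/
noncomputable def theContent : Content M where
  toFun K := Real.toNNReal (lamR ν U K)
  mono' K₁ K₂ h := Real.toNNReal_mono (lamR_mono ν U hν h)
  sup_disjoint' K₁ K₂ hd _ _ := by
    simp only [TopologicalSpace.Compacts.coe_sup]
    rw [lamR_union_eq (K := (K₁ : Set M)) (L := (K₂ : Set M)) ν U hν K₁.2 K₂.2 hd,
      Real.toNNReal_add (lamR_nonneg ν U hν _) (lamR_nonneg ν U hν _)]
  sup_le' K₁ K₂ := by
    simp only [TopologicalSpace.Compacts.coe_sup]
    refine (Real.toNNReal_mono (lamR_union_le ν U hν K₁ K₂)).trans ?_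
    exact Real.toNNReal_add_le

/-- the limit measure -/
noncomputable def limMeas : Measure M := (theContent ν U hν).measure

lemma limMeas_open_le {V : Set M} (hV : IsOpen V) :
    limMeas ν U hν V ≤ ENNReal.ofReal (mA ν U V) := by
  rw [limMeas, Content.measure_apply _ hV.measurableSet,
    Content.outerMeasure_of_isOpen _ V hV]
  rw [show (⟨V, hV⟩ : TopologicalSpace.Opens M) = ⟨V, hV⟩ from rfl]
  refine iSup_le fun K => iSup_le fun hKV => ?_
  show ((theContent ν U hν).toFun K : ℝ≥0∞) ≤ _
  rw [← ENNReal.ofReal_coe_nnreal]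
  refine ENNReal.ofReal_le_ofReal ?_
  simp only [theContent, Real.coe_toNNReal', max_le_iff]
  exact ⟨lamR_le_mA ν U hν hV hKV, mA_nonneg ν U hν V⟩

lemma limMeas_univ : limMeas ν U hν univ = 1 := by
  refine le_antisymm ?_ ?_
  · calc limMeas ν U hν univ ≤ ENNReal.ofReal (mA ν U univ) :=
        limMeas_open_le ν U hν isOpen_univ
      _ = 1 := by rw [mA_univ ν U hν]; simp
  · rw [limMeas, Content.measure_apply _ MeasurableSet.univ,
      Content.outerMeasure_of_isOpen _ univ isOpen_univ]
    have h := Content.le_innerContent (theContent ν U hν) ⟨univ, isCompact_univ⟩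
      ⟨univ, isOpen_univ⟩ (subset_refl _)
    refine le_trans ?_ h
    show 1 ≤ ((theContent ν U hν).toFun ⟨univ, isCompact_univ⟩ : ℝ≥0∞)
    have : lamR ν U (univ : Set M) = 1 := by
      have h1 : lamR ν U (univ : Set M) ≤ mA ν U univ := lamR_le_mA ν U hν isOpen_univ (subset_refl _)
      have h2 : (1:ℝ) ≤ lamR ν U (univ : Set M) := by
        refine le_csInf (lamR_set_nonempty ν U hν univ) ?_
        rintro r ⟨V, ⟨hV, hUV⟩, rfl⟩
        have : V = univ := eq_univ_of_univ_subset hUV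
        rw [this, mA_univ ν U hν]
      rw [mA_univ ν U hν] at h1
      linarith
    simp [theContent, this]

lemma limMeas_prob : IsProbabilityMeasure (limMeas ν U hν) := ⟨limMeas_univ ν U hν⟩

end aux


section aux2
variable {M : Type*} [MetricSpace M] [CompactSpace M] [MeasurableSpace M] [BorelSpace M]

lemma cont_integrable (μ' : Measure M) [IsFiniteMeasure μ'] {f : M → ℝ} (hf : Continuous f) :
    Integrable f μ' :=
  hf.integrable_of_hasCompactSupport
    (IsCompact.of_isClosed_subset isCompact_univ (isClosed_tsupport f) (subset_univ _))

lemma cont_bound {f : M → ℝ} (hf : Continuous f) : ∃ C : ℝ, 0 ≤ C ∧ ∀ x, |f x| ≤ C := by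
  rcases isEmpty_or_nonempty M with hM | hM
  · exact ⟨0, le_refl _, fun x => (IsEmpty.false x).elim⟩
  · obtain ⟨x, -, hx⟩ := isCompact_univ.exists_isMaxOn univ_nonempty
      (continuous_abs.comp hf).continuousOn
    exact ⟨|f x|, abs_nonneg _, fun y => hx (mem_univ y)⟩

/-- integral of the step function -/
lemma integral_step (μ' : Measure M) [IsFiniteMeasure μ'] {f : M → ℝ} (hf : Continuous f)
    (δ : ℝ) (k : ℕ) :
    ∫ x, (∑ i ∈ Finset.range k, Set.indicator {y | δ * i < f y} (fun _ => δ) x) ∂μ'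
      = ∑ i ∈ Finset.range k, δ * (μ' {y | δ * i < f y}).toReal := by
  have hopen : ∀ i : ℕ, IsOpen {y | δ * i < f y} := fun i =>
    isOpen_lt continuous_const hf
  rw [integral_finset_sum]
  · refine Finset.sum_congr rfl (fun i _ => ?_)
    rw [integral_indicator_const _ (hopen i).measurableSet, smul_eq_mul, mul_comm, measureReal_def]
  · exact fun i _ => (integrable_indicator_iff (hopen i).measurableSet).2
      (integrableOn_const (measure_ne_top _ _))

lemma step_bounds {f : M → ℝ} {δ : ℝ} (hδ : 0 < δ) {C : ℝ} (h0 : ∀ x, 0 ≤ f x)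
    (hC : ∀ x, f x ≤ C) (x : M) :
    f x ≤ (∑ i ∈ Finset.range ⌈C / δ⌉₊, Set.indicator {y | δ * i < f y} (fun _ => δ) x)
    ∧ (∑ i ∈ Finset.range ⌈C / δ⌉₊, Set.indicator {y | δ * i < f y} (fun _ => δ) x)
        ≤ f x + δ := by
  set k := ⌈C / δ⌉₊ with hk
  set m := ⌈f x / δ⌉₊ with hm
  have hmk : m ≤ k := Nat.ceil_le_ceil (by gcongr; exact hC x)
  have hsum : (∑ i ∈ Finset.range k, Set.indicator {y | δ * i < f y} (fun _ => δ) x)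
      = m * δ := by
    have : ∀ i : ℕ, Set.indicator {y | δ * i < f y} (fun _ => δ) x
        = if i < m then δ else 0 := by
      intro i
      rw [Set.indicator_apply]
      congr 1
      simp only [mem_setOf_eq, eq_iff_iff]
      rw [hm, Nat.lt_ceil, lt_div_iff₀ hδ, mul_comm]
    simp_rw [this]
    rw [Finset.sum_ite, Finset.sum_const_zero, add_zero, Finset.sum_const]
    have hfil : (Finset.range k).filter (fun i => i < m) = Finset.range m := by
      ext i; simp only [Finset.mem_filter, Finset.mem_range]; omega
    rw [hfil, Finset.card_range, nsmul_eq_mul]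
  constructor
  · rw [hsum]
    have hle : f x / δ ≤ (m:ℝ) := by rw [hm]; exact Nat.le_ceil _
    calc f x = (f x / δ) * δ := by field_simp
      _ ≤ m * δ := by gcongr
  · rw [hsum]
    have h2 : (m : ℝ) < f x / δ + 1 := by
      rw [hm]
      exact Nat.ceil_lt_add_one (div_nonneg (h0 x) hδ.le)
    calc (m : ℝ) * δ ≤ (f x / δ + 1) * δ := by gcongr
      _ = f x + δ := by field_simp

end aux2


section aux3
variable {M : Type*} [MetricSpace M] [CompactSpace M] [MeasurableSpace M] [BorelSpace M]
variable (ν : ℕ → Measure M) (U : Ultrafilter ℕ)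

noncomputable def Ilim (f : M → ℝ) : ℝ := limUnder (U : Filter ℕ) (fun n => ∫ x, f x ∂ν n)

variable (hν : ∀ n, IsProbabilityMeasure (ν n))
include hν

lemma tendsto_Ilim {f : M → ℝ} (hf : Continuous f) :
    Tendsto (fun n => ∫ x, f x ∂ν n) (U : Filter ℕ) (𝓝 (Ilim ν U f)) := by
  obtain ⟨C, hC0, hC⟩ := cont_bound (M := M) hf
  refine tendsto_of_bdd U (a := -C) (b := C) (f := fun n => ∫ x, f x ∂ν n) (fun n => ?_)
  haveI := hν n
  have : ‖∫ x, f x ∂ν n‖ ≤ C := by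
    calc ‖∫ x, f x ∂ν n‖ ≤ C * ((ν n) univ).toReal :=
        norm_integral_le_of_norm_le_const (Eventually.of_forall (fun x => by
          simpa using hC x))
      _ = C := by simp
  rw [Real.norm_eq_abs, abs_le] at this
  exact ⟨this.1, this.2⟩

omit hν in
lemma step_integrable (μ' : Measure M) [IsFiniteMeasure μ'] {f : M → ℝ} (hf : Continuous f)
    (δ : ℝ) (k : ℕ) :
    Integrable (fun x => ∑ i ∈ Finset.range k,
      Set.indicator {y | δ * i < f y} (fun _ => δ) x) μ' := by
  refine integrable_finset_sum _ (fun i _ => ?_)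
  exact (integrable_indicator_iff (isOpen_lt continuous_const hf).measurableSet).2
    (integrableOn_const (measure_ne_top _ _))

lemma integral_le_Ilim_aux {f : M → ℝ} (hf : Continuous f) {C : ℝ} (h0 : ∀ x, 0 ≤ f x)
    (hC : ∀ x, f x ≤ C) {δ : ℝ} (hδ : 0 < δ) :
    ∫ x, f x ∂(limMeas ν U hν) ≤ Ilim ν U f + δ := by
  haveI := limMeas_prob ν U hν
  set μ := limMeas ν U hν with hμ
  set k := ⌈C / δ⌉₊ with hk
  set S := fun x => ∑ i ∈ Finset.range k, Set.indicator {y | δ * i < f y} (fun _ => δ) x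
    with hS
  have hopen : ∀ i : ℕ, IsOpen {y | δ * (i:ℕ) < f y} := fun i =>
    isOpen_lt continuous_const hf
  have h1 : ∫ x, f x ∂μ ≤ ∫ x, S x ∂μ :=
    integral_mono (cont_integrable μ hf) (step_integrable μ hf δ k)
      (fun x => (step_bounds hδ h0 hC x).1)
  have h2 : ∫ x, S x ∂μ = ∑ i ∈ Finset.range k, δ * (μ {y | δ * i < f y}).toReal :=
    integral_step μ hf δ k
  have h3 : ∀ i : ℕ, (μ {y | δ * (i:ℕ) < f y}).toReal ≤ mA ν U {y | δ * i < f y} := by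
    intro i
    have := limMeas_open_le ν U hν (hopen i)
    rw [← hμ] at this
    calc (μ {y | δ * (i:ℕ) < f y}).toReal
        ≤ (ENNReal.ofReal (mA ν U {y | δ * i < f y})).toReal :=
          ENNReal.toReal_mono ENNReal.ofReal_ne_top this
      _ = mA ν U {y | δ * i < f y} := ENNReal.toReal_ofReal (mA_nonneg ν U hν {y | δ * i < f y})
  have h4 : ∑ i ∈ Finset.range k, δ * (μ {y | δ * i < f y}).toReal
      ≤ ∑ i ∈ Finset.range k, δ * mA ν U {y | δ * i < f y} := by
    refine Finset.sum_le_sum (fun i _ => ?_)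
    exact mul_le_mul_of_nonneg_left (h3 i) hδ.le
  have h5 : ∑ i ∈ Finset.range k, δ * mA ν U {y | δ * i < f y} ≤ Ilim ν U f + δ := by
    refine le_of_tendsto_of_tendsto'
      (f := fun n => ∑ i ∈ Finset.range k, δ * ((ν n) {y | δ * i < f y}).toReal)
      (g := fun n => (∫ x, f x ∂ν n) + δ)
      (tendsto_finset_sum _ (fun i _ => (tendsto_mA ν U hν _).const_mul δ))
      (((tendsto_Ilim ν U hν hf).add tendsto_const_nhds)) (fun n => ?_)
    haveI := hν n
    have e1 : ∑ i ∈ Finset.range k, δ * ((ν n) {y | δ * i < f y}).toReal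
        = ∫ x, S x ∂(ν n) := (integral_step (ν n) hf δ k).symm
    have e2 : ∫ x, S x ∂(ν n) ≤ ∫ x, (f x + δ) ∂(ν n) :=
      integral_mono (step_integrable (ν n) hf δ k)
        ((cont_integrable (ν n) hf).add (integrable_const δ))
        (fun x => (step_bounds hδ h0 hC x).2)
    have e3 : ∫ x, (f x + δ) ∂(ν n) = (∫ x, f x ∂ν n) + δ := by
      rw [integral_add (cont_integrable (ν n) hf) (integrable_const δ), integral_const]
      simp
    show ∑ i ∈ Finset.range k, δ * ((ν n) {y | δ * ↑i < f y}).toReal ≤ ∫ (x : M), f x ∂ν n + δ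
    rw [e1]; rw [e3] at e2; exact e2
  linarith

lemma integral_le_Ilim {f : M → ℝ} (hf : Continuous f) :
    ∫ x, f x ∂(limMeas ν U hν) ≤ Ilim ν U f := by
  haveI := limMeas_prob ν U hν
  obtain ⟨C, hC0, hC⟩ := cont_bound (M := M) hf
  have hg : Continuous (fun x => f x + C) := hf.add continuous_const
  have h0 : ∀ x, 0 ≤ f x + C := fun x => by have := (abs_le.1 (hC x)).1; linarith
  have hC2 : ∀ x, f x + C ≤ C + C := fun x => by have := (abs_le.1 (hC x)).2; linarith
  have hIg : Ilim ν U (fun x => f x + C) = Ilim ν U f + C := by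
    have ht : Tendsto (fun n => ∫ x, (f x + C) ∂ν n) (U : Filter ℕ) (𝓝 (Ilim ν U f + C)) := by
      have : ∀ n, ∫ x, (f x + C) ∂ν n = (∫ x, f x ∂ν n) + C := by
        intro n
        haveI := hν n
        rw [integral_add (cont_integrable (ν n) hf) (integrable_const C), integral_const]
        simp
      simp_rw [this]
      exact (tendsto_Ilim ν U hν hf).add tendsto_const_nhds
    exact ht.limUnder_eq
  have hEg : ∫ x, (f x + C) ∂(limMeas ν U hν) = (∫ x, f x ∂(limMeas ν U hν)) + C := by
    rw [integral_add (cont_integrable _ hf) (integrable_const C), integral_const]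
    simp
  refine le_of_forall_pos_le_add (fun δ hδ => ?_)
  have := integral_le_Ilim_aux ν U hν hg h0 hC2 hδ
  rw [hEg, hIg] at this
  linarith

lemma integral_limMeas_eq {f : M → ℝ} (hf : Continuous f) :
    ∫ x, f x ∂(limMeas ν U hν) = Ilim ν U f := by
  refine le_antisymm (integral_le_Ilim ν U hν hf) ?_
  have h1 := integral_le_Ilim ν U hν hf.neg
  have h2 : Ilim ν U (fun x => -f x) = -Ilim ν U f := by
    have ht : Tendsto (fun n => ∫ x, (-f x) ∂ν n) (U : Filter ℕ) (𝓝 (-Ilim ν U f)) := by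
      have : ∀ n, ∫ x, (-f x) ∂ν n = -(∫ x, f x ∂ν n) := fun n => integral_neg f
      simp_rw [this]
      exact (tendsto_Ilim ν U hν hf).neg
    exact ht.limUnder_eq
  rw [show (fun x => -f x) = -f from rfl] at h2
  have h3 : ∫ x, (-f) x ∂(limMeas ν U hν) = -∫ x, f x ∂(limMeas ν U hν) := by
    simpa using integral_neg f (μ := limMeas ν U hν)
  have h1' : ∫ x, (-f) x ∂(limMeas ν U hν) ≤ Ilim ν U (-f) := h1
  rw [h3, h2] at h1'
  linarith

end aux3


theorem stmt_5 {M : Type*} [MetricSpace M] [CompactSpace M]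
    [MeasurableSpace M] [BorelSpace M]
    (φ : ℝ → M → M) (hφ : Continuous fun p : ℝ × M => φ p.1 p.2)
    (h0 : ∀ x, φ 0 x = x) (hadd : ∀ s t x, φ (s + t) x = φ s (φ t x))
    (g : M → ℝ) (hg : Continuous g)
    (x₀ : M) (hx₀ : ∀ t ≥ (0:ℝ), ∫ s in (0:ℝ)..t, g (φ s x₀) ≤ 0) :
    ∃ μ : Measure M, IsProbabilityMeasure μ ∧
      (∀ t : ℝ, Measure.map (φ t) μ = μ) ∧
      μ (⋂ T ∈ Set.Ici (0:ℝ), closure {y | ∃ t ≥ T, y = φ t x₀})ᶜ = 0 ∧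
      ∫ y, g y ∂μ ≤ 0 := by
  classical
  set F : ℝ → M := fun s => φ s x₀ with hF_def
  have hF : Continuous F := hφ.comp (continuous_id.prodMk continuous_const)
  set ν : ℕ → Measure M := fun n =>
    ((n : ℝ≥0∞) + 1)⁻¹ • Measure.map F (volume.restrict (Set.Ioc (0:ℝ) ((n:ℝ)+1))) with hν_def
  have hne : ∀ n : ℕ, ((n : ℝ≥0∞) + 1) ≠ 0 := fun n => by simp
  have hnt : ∀ n : ℕ, ((n : ℝ≥0∞) + 1) ≠ ⊤ := fun n => by
    simp [ENNReal.add_ne_top]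
  have hofReal : ∀ n : ℕ, ENNReal.ofReal ((n:ℝ)+1) = (n : ℝ≥0∞) + 1 := fun n => by
    rw [ENNReal.ofReal_add (Nat.cast_nonneg n) zero_le_one, ENNReal.ofReal_natCast,
      ENNReal.ofReal_one]
  have hν : ∀ n, IsProbabilityMeasure (ν n) := by
    intro n
    constructor
    rw [hν_def]
    simp only [Measure.smul_apply, smul_eq_mul]
    rw [Measure.map_apply hF.measurable MeasurableSet.univ, Set.preimage_univ,
      Measure.restrict_apply_univ, Real.volume_Ioc]
    rw [show (n:ℝ) + 1 - 0 = (n:ℝ) + 1 by ring, hofReal n]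
    exact ENNReal.inv_mul_cancel (hne n) (hnt n)
  set U : Ultrafilter ℕ := Ultrafilter.of atTop with hU_def
  have hU : (U : Filter ℕ) ≤ atTop := Ultrafilter.of_le _
  -- integral formula for ν n
  have hInt : ∀ (f : M → ℝ), Continuous f → ∀ n : ℕ,
      ∫ x, f x ∂ν n = ((n:ℝ)+1)⁻¹ * ∫ s in (0:ℝ)..((n:ℝ)+1), f (φ s x₀) := by
    intro f hf n
    rw [hν_def]
    simp only []
    rw [integral_smul_measure,
      integral_map hF.aemeasurable hf.aestronglyMeasurable,
      intervalIntegral.integral_of_le (by positivity : (0:ℝ) ≤ (n:ℝ)+1)]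
    have hsc : (((n : ℝ≥0∞) + 1)⁻¹).toReal = ((n:ℝ)+1)⁻¹ := by
      rw [ENNReal.toReal_inv, ← hofReal n,
        ENNReal.toReal_ofReal (by positivity : (0:ℝ) ≤ (n:ℝ)+1)]
    rw [smul_eq_mul, hsc]
  set μ : Measure M := limMeas ν U hν with hμ_def
  haveI hprob : IsProbabilityMeasure μ := limMeas_prob ν U hν
  refine ⟨μ, hprob, ?_, ?_, ?_⟩
  · -- invariance
    intro t
    have hφt : Continuous (φ t) := hφ.comp (continuous_const.prodMk continuous_id)
    haveI : IsProbabilityMeasure (Measure.map (φ t) μ) :=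
      Measure.isProbabilityMeasure_map hφt.measurable.aemeasurable
    -- shift invariance of Ilim
    have hshift : ∀ (h : M → ℝ), Continuous h →
        Ilim ν U (fun x => h (φ t x)) = Ilim ν U h := by
      intro h hh
      obtain ⟨C, hC0, hC⟩ := cont_bound (M := M) hh
      have hhF : ∀ a b : ℝ, IntervalIntegrable (fun s => h (F s)) volume a b :=
        fun a b => (hh.comp hF).intervalIntegrable a b
      have hkey : Tendsto (fun n => (∫ x, h (φ t x) ∂ν n) - ∫ x, h x ∂ν n) atTop (𝓝 0) := by
      -- difference bound
        have hbound : ∀ n : ℕ, |(∫ x, h (φ t x) ∂ν n) - ∫ x, h x ∂ν n|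
            ≤ ((n:ℝ)+1)⁻¹ * (2 * C * |t|) := by
          intro n
          set b : ℝ := (n:ℝ) + 1 with hb
          have hb0 : (0:ℝ) ≤ b := by positivity
          have e1 : ∫ x, h (φ t x) ∂ν n = ((n:ℝ)+1)⁻¹ * ∫ s in (0:ℝ)..b, h (φ t (φ s x₀)) :=
            hInt (fun x => h (φ t x)) (hh.comp hφt) n
          have e2 : ∀ s : ℝ, h (φ t (φ s x₀)) = h (F (t + s)) := by
            intro s
            rw [hF_def]
            simp only []
            rw [← hadd t s x₀]
          have e3 : ∫ s in (0:ℝ)..b, h (φ t (φ s x₀)) = ∫ u in t..(t + b), h (F u) := by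
            simp_rw [e2]
            rw [intervalIntegral.integral_comp_add_left (fun u => h (F u)) t, add_zero]
          have e4 : ∫ x, h x ∂ν n = ((n:ℝ)+1)⁻¹ * ∫ s in (0:ℝ)..b, h (F s) :=
            hInt h hh n
          have e5 : (∫ u in t..(t+b), h (F u)) - ∫ s in (0:ℝ)..b, h (F s)
              = (∫ u in t..(0:ℝ), h (F u)) + ∫ u in b..(t+b), h (F u) := by
            have a1 : (∫ u in t..(0:ℝ), h (F u)) + ∫ u in (0:ℝ)..(t+b), h (F u)
                = ∫ u in t..(t+b), h (F u) :=
              intervalIntegral.integral_add_adjacent_intervals (hhF t 0) (hhF 0 (t+b))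
            have a2 : (∫ u in (0:ℝ)..b, h (F u)) + ∫ u in b..(t+b), h (F u)
                = ∫ u in (0:ℝ)..(t+b), h (F u) :=
              intervalIntegral.integral_add_adjacent_intervals (hhF 0 b) (hhF b (t+b))
            linarith
          have n1 : |∫ u in t..(0:ℝ), h (F u)| ≤ C * |t| := by
            have := intervalIntegral.norm_integral_le_of_norm_le_const
              (f := fun u => h (F u)) (a := t) (b := (0:ℝ)) (C := C)
              (fun x _ => by simpa using hC (F x))
            simpa using this
          have n2 : |∫ u in b..(t+b), h (F u)| ≤ C * |t| := by
            have := intervalIntegral.norm_integral_le_of_norm_le_const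
              (f := fun u => h (F u)) (a := b) (b := t + b) (C := C)
              (fun x _ => by simpa using hC (F x))
            rw [Real.norm_eq_abs] at this
            have : |∫ u in b..(t+b), h (F u)| ≤ C * |t + b - b| := this
            simpa using this
          have hinv0 : (0:ℝ) ≤ ((n:ℝ)+1)⁻¹ := by positivity
          calc |(∫ x, h (φ t x) ∂ν n) - ∫ x, h x ∂ν n|
              = ((n:ℝ)+1)⁻¹ * |(∫ u in t..(t+b), h (F u)) - ∫ s in (0:ℝ)..b, h (F s)| := by
                rw [e1, e3, e4, ← mul_sub, abs_mul, abs_of_nonneg hinv0]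
            _ ≤ ((n:ℝ)+1)⁻¹ * (2 * C * |t|) := by
                refine mul_le_mul_of_nonneg_left ?_ hinv0
                rw [e5]
                calc |(∫ u in t..(0:ℝ), h (F u)) + ∫ u in b..(t+b), h (F u)|
                    ≤ |∫ u in t..(0:ℝ), h (F u)| + |∫ u in b..(t+b), h (F u)| := abs_add_le _ _
                  _ ≤ 2 * C * |t| := by linarith
        have hb : Tendsto (fun n : ℕ => ((n:ℝ)+1)⁻¹ * (2 * C * |t|)) atTop (𝓝 0) := by
          have h1 : Tendsto (fun n : ℕ => ((n:ℝ)+1)⁻¹) atTop (𝓝 0) := by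
            have := tendsto_one_div_add_atTop_nhds_zero_nat (𝕜 := ℝ)
            simpa [one_div] using this
          simpa using h1.mul_const (2 * C * |t|)
        refine squeeze_zero_norm (fun n => ?_) hb
        simpa using hbound n
      have hkeyU : Tendsto (fun n => (∫ x, h (φ t x) ∂ν n) - ∫ x, h x ∂ν n)
          (U : Filter ℕ) (𝓝 0) := hkey.mono_left hU
      have hIh : Tendsto (fun n => ∫ x, h x ∂ν n) (U : Filter ℕ) (𝓝 (Ilim ν U h)) :=
        tendsto_Ilim ν U hν hh
      have ht2 : Tendsto (fun n => ∫ x, h (φ t x) ∂ν n) (U : Filter ℕ) (𝓝 (Ilim ν U h)) := by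
        have := hkeyU.add hIh
        simpa using this
      exact ht2.limUnder_eq
    refine ext_of_forall_lintegral_eq_of_IsFiniteMeasure (fun f => ?_)
    have hfc : Continuous (fun x => (f x : ℝ)) := NNReal.continuous_coe.comp f.continuous
    have hfc' : Continuous (fun x => ((f (φ t x) : ℝ))) := hfc.comp hφt
    rw [lintegral_map f.continuous.measurable.coe_nnreal_ennreal hφt.measurable]
    rw [lintegral_coe_eq_integral _ (cont_integrable μ hfc'),
      lintegral_coe_eq_integral _ (cont_integrable μ hfc)]
    congr 1
    rw [integral_limMeas_eq ν U hν hfc', integral_limMeas_eq ν U hν hfc]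
    exact hshift _ hfc
  · -- supported on the omega-limit set
    have hCk : ∀ k : ℕ, μ (closure {y | ∃ t ≥ (k:ℝ), y = φ t x₀})ᶜ = 0 := by
      intro k
      set A : Set M := (closure {y | ∃ t ≥ (k:ℝ), y = φ t x₀})ᶜ with hA_def
      have hAopen : IsOpen A := isClosed_closure.isOpen_compl
      have hbound : ∀ n : ℕ, (ν n A).toReal ≤ ((n:ℝ)+1)⁻¹ * k := by
        intro n
        have hsub : F ⁻¹' A ∩ Set.Ioc (0:ℝ) ((n:ℝ)+1) ⊆ Set.Ioc (0:ℝ) (k:ℝ) := by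
          rintro s ⟨hs1, hs2⟩
          refine ⟨hs2.1, ?_⟩
          by_contra hsk
          push_neg at hsk
          have : F s ∈ closure {y | ∃ t ≥ (k:ℝ), y = φ t x₀} :=
            subset_closure ⟨s, hsk.le, rfl⟩
          exact hs1 this
        have h1 : ν n A ≤ ((n : ℝ≥0∞) + 1)⁻¹ * ENNReal.ofReal k := by
          rw [hν_def]
          simp only [Measure.smul_apply, smul_eq_mul]
          refine mul_le_mul_right ?_ _
          rw [Measure.map_apply hF.measurable hAopen.measurableSet,
            Measure.restrict_apply (hF.measurable hAopen.measurableSet)]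
          calc volume (F ⁻¹' A ∩ Set.Ioc (0:ℝ) ((n:ℝ)+1)) ≤ volume (Set.Ioc (0:ℝ) (k:ℝ)) :=
              measure_mono hsub
            _ = ENNReal.ofReal k := by rw [Real.volume_Ioc, sub_zero]
        calc (ν n A).toReal ≤ (((n : ℝ≥0∞) + 1)⁻¹ * ENNReal.ofReal k).toReal :=
            ENNReal.toReal_mono (by
              refine ENNReal.mul_ne_top ?_ ENNReal.ofReal_ne_top
              simp [ENNReal.inv_ne_top, hne n]) h1
          _ = ((n:ℝ)+1)⁻¹ * k := by
            rw [ENNReal.toReal_mul, ENNReal.toReal_inv, ← hofReal n,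
              ENNReal.toReal_ofReal (by positivity : (0:ℝ) ≤ (n:ℝ)+1),
              ENNReal.toReal_ofReal (Nat.cast_nonneg k)]
      have hb : Tendsto (fun n : ℕ => ((n:ℝ)+1)⁻¹ * (k:ℝ)) atTop (𝓝 0) := by
        have h1 : Tendsto (fun n : ℕ => ((n:ℝ)+1)⁻¹) atTop (𝓝 0) := by
          have := tendsto_one_div_add_atTop_nhds_zero_nat (𝕜 := ℝ)
          simpa [one_div] using this
        simpa using h1.mul_const (k:ℝ)
      have hmA : mA ν U A ≤ 0 :=
        le_of_tendsto_of_tendsto' (tendsto_mA ν U hν A) (hb.mono_left hU) hbound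
      have : μ A ≤ 0 := by
        calc μ A ≤ ENNReal.ofReal (mA ν U A) := limMeas_open_le ν U hν hAopen
          _ ≤ ENNReal.ofReal 0 := ENNReal.ofReal_le_ofReal hmA
          _ = 0 := ENNReal.ofReal_zero
      exact le_antisymm this zero_le
    refine measure_mono_null ?_
      (measure_iUnion_null (s := fun k : ℕ => (closure {y | ∃ t ≥ (k:ℝ), y = φ t x₀})ᶜ) hCk)
    intro x hx
    simp only [Set.mem_compl_iff, Set.mem_iInter, not_forall] at hx
    obtain ⟨T, hT, hxT⟩ := hx
    refine Set.mem_iUnion.2 ⟨⌈T⌉₊, ?_⟩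
    simp only [Set.mem_compl_iff]
    intro hmem
    refine hxT ?_
    refine closure_mono ?_ hmem
    rintro y ⟨t, ht, rfl⟩
    exact ⟨t, le_trans (Nat.le_ceil T) ht, rfl⟩
  · -- integral of g
    rw [integral_limMeas_eq ν U hν hg]
    have hle : ∀ n : ℕ, ∫ x, g x ∂ν n ≤ 0 := by
      intro n
      rw [hInt g hg n]
      have h1 : ∫ s in (0:ℝ)..((n:ℝ)+1), g (φ s x₀) ≤ 0 := hx₀ _ (by positivity)
      have h2 : (0:ℝ) ≤ ((n:ℝ)+1)⁻¹ := by positivity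
      exact mul_nonpos_of_nonneg_of_nonpos h2 h1
    exact le_of_tendsto (tendsto_Ilim ν U hν hg) (Eventually.of_forall hle)
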